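/- arXiv:2109.11244 — 6 statements merged into one kernel-verified Lean document; each statement's English description precedes it below -/
import Mathlib

section
/- Let V be a type, adj a relation on V, and ρ, a, v vertices. If a is reachable from ρ and v is stable for a (relative to ρ), then a is reachable from v. (In words: a stable ancestor of a vertex reachable from the root is itself an ancestor of that vertex.) -/
/-- `v` is stable for `a` relative to root `ρ`: either `ρ = v`, or `a` is not
reachable from `ρ` when all arcs entering `v` are forbidden (i.e. every directed
path from `ρ` to `a` passes through `v`). -/
def Stable {V : Type*} (adj : V → V → Prop) (ρ v a : V) : Prop :=
  ρ = v ∨ ¬ Relation.ReflTransGen (fun x y => adj x y ∧ y ≠ v) ρ a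

/-- A stable vertex for a vertex reachable from the root is itself an ancestor
of that vertex. -/
theorem stable_ancestor {V : Type*} (adj : V → V → Prop) (ρ a v : V)
    (hreach : Relation.ReflTransGen adj ρ a)
    (hstable : Stable adj ρ v a) :
    Relation.ReflTransGen adj v a := by
  have key : Relation.ReflTransGen (fun x y => adj x y ∧ y ≠ v) ρ a ∨
      Relation.ReflTransGen adj v a := by
    clear hstable
    induction hreach with
    | refl => exact Or.inl Relation.ReflTransGen.refl
    | tail hb hbc ih =>
      rcases ih with h | h
      · by_cases hcv : ‹_› = v
        · subst hcv; exact Or.inr Relation.ReflTransGen.refl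
        · exact Or.inl (h.tail ⟨hbc, hcv⟩)
      · exact Or.inr (h.tail hbc)
  rcases hstable with rfl | hns
  · exact hreach
  · exact key.resolve_left hns
end

section
/- Let V be a type, adj a relation on V, and ρ, a vertices with a reachable from ρ. If v and w are both stable for a (relative to ρ), then v is reachable from w or w is reachable from v. (Stable vertices for a common vertex are comparable under the ancestor relation.) -/
private lemma auxA {V : Type*} (adj : V → V → Prop) (s x y : V)
    (h : Relation.ReflTransGen adj x y) :
    Relation.ReflTransGen (fun p q => adj p q ∧ q ≠ s) x y ∨
      Relation.ReflTransGen adj x s := by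
  induction h with
  | refl => exact Or.inl Relation.ReflTransGen.refl
  | tail _ hstep ih =>
    rename_i b c _
    rcases ih with ih | ih
    · by_cases hc : c = s
      · subst hc
        exact Or.inr ((Relation.ReflTransGen.mono (fun p q hpq => hpq.1) _ _ ih).tail hstep)
      · exact Or.inl (ih.tail ⟨hstep, hc⟩)
    · exact Or.inr ih

private lemma auxB {V : Type*} (adj : V → V → Prop) (ρ v w y : V) (hvw : v ≠ w)
    (h : Relation.ReflTransGen adj ρ y) :
    Relation.ReflTransGen (fun p q => adj p q ∧ q ≠ v ∧ q ≠ w) ρ y ∨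
      (Relation.ReflTransGen (fun p q => adj p q ∧ q ≠ w) ρ v ∧
        Relation.ReflTransGen adj v y) ∨
      (Relation.ReflTransGen (fun p q => adj p q ∧ q ≠ v) ρ w ∧
        Relation.ReflTransGen adj w y) := by
  induction h with
  | refl => exact Or.inl Relation.ReflTransGen.refl
  | tail _ hstep ih =>
    rename_i b c _
    rcases ih with ih | ⟨pre, suf⟩ | ⟨pre, suf⟩
    · by_cases hc : c = v
      · subst hc
        exact Or.inr (Or.inl ⟨(Relation.ReflTransGen.mono (fun p q hpq => ⟨hpq.1, hpq.2.2⟩) _ _ ih).tail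
          ⟨hstep, hvw⟩, Relation.ReflTransGen.refl⟩)
      · by_cases hc' : c = w
        · subst hc'
          exact Or.inr (Or.inr ⟨(Relation.ReflTransGen.mono (fun p q hpq => ⟨hpq.1, hpq.2.1⟩) _ _ ih).tail
            ⟨hstep, fun h' => hvw h'.symm⟩, Relation.ReflTransGen.refl⟩)
        · exact Or.inl (ih.tail ⟨hstep, hc, hc'⟩)
    · exact Or.inr (Or.inl ⟨pre, suf.tail hstep⟩)
    · exact Or.inr (Or.inr ⟨pre, suf.tail hstep⟩)

/-- Stable vertices for a common vertex are comparable under the ancestor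
relation. -/
theorem stable_comparable {V : Type*} (adj : V → V → Prop) (ρ a v w : V)
    (hreach : Relation.ReflTransGen adj ρ a)
    (hv : Stable adj ρ v a) (hw : Stable adj ρ w a) :
    Relation.ReflTransGen adj w v ∨ Relation.ReflTransGen adj v w := by
  by_cases hvw : v = w
  · subst hvw; exact Or.inl Relation.ReflTransGen.refl
  rcases auxB adj ρ v w a hvw hreach with h | ⟨pre, suf⟩ | ⟨pre, suf⟩
  · -- path avoiding both v and w: forces ρ = v and ρ = w, contradiction
    rcases hv with rfl | hv'
    · rcases hw with rfl | hw'
      · exact absurd rfl hvw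
      · exact absurd (Relation.ReflTransGen.mono (fun p q hpq => ⟨hpq.1, hpq.2.2⟩) _ _ h) hw'
    · exact absurd (Relation.ReflTransGen.mono (fun p q hpq => ⟨hpq.1, hpq.2.1⟩) _ _ h) hv'
  · -- reached v first (avoiding w); w must be on the suffix
    rcases hw with rfl | hw'
    · exact Or.inl (Relation.ReflTransGen.mono (fun p q hpq => hpq.1) _ _ pre)
    · rcases auxA adj w v a suf with h' | h'
      · exact absurd (pre.trans h') hw'
      · exact Or.inr h'
  · -- reached w first (avoiding v); v must be on the suffix
    rcases hv with rfl | hv'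
    · exact Or.inr (Relation.ReflTransGen.mono (fun p q hpq => hpq.1) _ _ pre)
    · rcases auxA adj v w a suf with h' | h'
      · exact absurd (pre.trans h') hv'
      · exact Or.inl h'
end

section
/- Crossing-arc lemma: let V be a type, adj an acyclic relation on V, ρ a root (every vertex is reachable from ρ), and X a set of vertices ('leaves') such that every vertex has at least one descendant in X. Let v be a vertex such that for every ℓ ∈ X, either ℓ is not a descendant of v, or v is stable for ℓ (relative to ρ). Then every arc (u,w) with w a descendant of v and u not a descendant of v satisfies w = v. (Every arc entering the set of descendants of v enters at v itself.) -/
/-- Any path either avoids `v` (after its start) or `v` reaches the endpoint. -/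
lemma avoid_or_through {V : Type*} (adj : V → V → Prop) (v a b : V)
    (h : Relation.ReflTransGen adj a b) :
    Relation.ReflTransGen (fun x y => adj x y ∧ y ≠ v) a b ∨
      Relation.ReflTransGen adj v b := by
  induction h with
  | refl => exact Or.inl Relation.ReflTransGen.refl
  | @tail c d hac hcd ih =>
    rcases ih with ih | ih
    · by_cases hdv : d = v
      · exact Or.inr (hdv ▸ Relation.ReflTransGen.refl)
      · exact Or.inl (ih.tail ⟨hcd, hdv⟩)
    · exact Or.inr (ih.tail hcd)

/-- Any path either avoids `v` (after its start) or the start reaches `v`. -/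
lemma avoid_or_reaches {V : Type*} (adj : V → V → Prop) (v a b : V)
    (h : Relation.ReflTransGen adj a b) :
    Relation.ReflTransGen (fun x y => adj x y ∧ y ≠ v) a b ∨
      Relation.ReflTransGen adj a v := by
  induction h using Relation.ReflTransGen.head_induction_on with
  | refl => exact Or.inl Relation.ReflTransGen.refl
  | @head c d hcd hdb ih =>
    rcases ih with ih | ih
    · by_cases hdv : d = v
      · exact Or.inr (Relation.ReflTransGen.single (hdv ▸ hcd))
      · exact Or.inl (ih.head ⟨hcd, hdv⟩)
    · exact Or.inr (ih.head hcd)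

/-- Crossing-arc lemma: if every vertex has a descendant leaf in `X`, and `v` is
stable for every leaf below it, then every arc entering the set of descendants
of `v` enters at `v` itself. -/
theorem crossing_arc {V : Type*} (adj : V → V → Prop)
    (hacyc : ∀ x, ¬ Relation.TransGen adj x x)
    (ρ : V) (hroot : ∀ v, Relation.ReflTransGen adj ρ v)
    (X : Set V) (hX : ∀ v : V, ∃ ℓ ∈ X, Relation.ReflTransGen adj v ℓ)
    (v : V)
    (hv : ∀ ℓ ∈ X, ¬ Relation.ReflTransGen adj v ℓ ∨ Stable adj ρ v ℓ)
    (u w : V) (harc : adj u w)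
    (hw : Relation.ReflTransGen adj v w)
    (hu : ¬ Relation.ReflTransGen adj v u) :
    w = v := by
  by_contra hwv
  obtain ⟨ℓ, hℓX, hwℓ⟩ := hX w
  have hvℓ : Relation.ReflTransGen adj v ℓ := hw.trans hwℓ
  rcases hv ℓ hℓX with h | h
  · exact h hvℓ
  rcases h with h | h
  · exact hu (h ▸ hroot u)
  have h1 : Relation.ReflTransGen (fun x y => adj x y ∧ y ≠ v) ρ u := by
    rcases avoid_or_through adj v ρ u (hroot u) with h1 | h1
    · exact h1
    · exact absurd h1 hu
  have h2 : Relation.ReflTransGen (fun x y => adj x y ∧ y ≠ v) w ℓ := by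
    rcases avoid_or_reaches adj v w ℓ hwℓ with h2 | h2
    · exact h2
    · have tvw : Relation.TransGen adj v w := by
        rcases (Relation.reflTransGen_iff_eq_or_transGen.mp hw) with h' | h'
        · exact absurd h' hwv
        · exact h'
      exact absurd (tvw.trans_left h2) (hacyc v)
  exact h ((h1.tail ⟨harc, hwv⟩).trans h2)
end

section
/- Cut-arc stability lemma: let adj be an acyclic relation on V, ρ a root (every vertex is reachable from ρ), and u, w vertices with adj u w. Let adj₀ be the relation obtained by deleting the single arc (u,w) (adj₀ x y ↔ adj x y ∧ ¬(x = u ∧ y = w)), and let sym be its symmetric closure (sym x y ↔ adj₀ x y ∨ adj₀ y x). Suppose w is not reachable from u under Relation.ReflTransGen sym (i.e., (u,w) is a cut-arc: deleting it disconnects u from w in the underlying undirected graph). Then for every vertex t reachable from w, the vertex w is stable for t relative to ρ (every directed path from ρ to t passes through w). -/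
/-- Cut-arc stability lemma: if deleting the arc `(u,w)` disconnects `u` from
`w` in the underlying undirected graph, then `w` is stable (relative to the
root `ρ`) for every vertex reachable from `w`. -/
theorem cut_arc_stable {V : Type*} (adj : V → V → Prop)
    (hacyc : ∀ x, ¬ Relation.TransGen adj x x)
    (ρ : V) (hroot : ∀ v, Relation.ReflTransGen adj ρ v)
    (u w : V) (huw : adj u w)
    (hcut : ¬ Relation.ReflTransGen
      (fun x y => (adj x y ∧ ¬(x = u ∧ y = w)) ∨ (adj y x ∧ ¬(y = u ∧ x = w))) u w)
    (t : V) (ht : Relation.ReflTransGen adj w t) :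
    Stable adj ρ w t := by
  set sym : V → V → Prop :=
    fun x y => (adj x y ∧ ¬(x = u ∧ y = w)) ∨ (adj y x ∧ ¬(y = u ∧ x = w)) with hsym
  have symm : Symmetric sym := by
    intro x y h; rcases h with h | h
    · exact Or.inr h
    · exact Or.inl h
  have symmRT : ∀ {a b : V}, Relation.ReflTransGen sym a b → Relation.ReflTransGen sym b a :=
    fun h => (@Relation.ReflTransGen.stdSymm _ _ ⟨fun _ _ h => symm h⟩).symm _ _ h
  -- w does not reach u
  have hwu : ¬ Relation.ReflTransGen adj w u := by
    intro h
    exact hacyc w (Relation.TransGen.trans_right h (Relation.TransGen.single huw))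
  -- lift a path all of whose vertices are reachable from w
  have lift1 : ∀ a b : V, Relation.ReflTransGen adj a b →
      Relation.ReflTransGen adj w a → Relation.ReflTransGen sym a b := by
    intro a b hab
    induction hab using Relation.ReflTransGen.head_induction_on with
    | refl => intro _; exact Relation.ReflTransGen.refl
    | head hac hcb ih =>
      rename_i a c
      intro hwa
      have hne : ¬ (a = u ∧ c = w) := by
        rintro ⟨rfl, rfl⟩; exact hwu hwa
      exact Relation.ReflTransGen.head (Or.inl ⟨hac, hne⟩)
        (ih (hwa.tail hac))
  -- lift a path whose endpoint is not reachable from w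
  have lift2 : ∀ a b : V, Relation.ReflTransGen adj a b →
      ¬ Relation.ReflTransGen adj w b → Relation.ReflTransGen sym a b := by
    intro a b hab
    induction hab using Relation.ReflTransGen.head_induction_on with
    | refl => intro _; exact Relation.ReflTransGen.refl
    | head hac hcb ih =>
      rename_i a c
      intro hb
      have hne : ¬ (a = u ∧ c = w) := by
        rintro ⟨rfl, rfl⟩; exact hb hcb
      exact Relation.ReflTransGen.head (Or.inl ⟨hac, hne⟩) (ih hb)
  by_cases hρ : ρ = w
  · exact Or.inl hρ
  refine Or.inr ?_
  intro hpath
  have hwt : Relation.ReflTransGen sym w t := lift1 w t ht Relation.ReflTransGen.refl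
  have hρu : Relation.ReflTransGen sym ρ u := lift2 ρ u (hroot u) hwu
  -- lift the w-avoiding path ρ → t to sym
  have hρt : Relation.ReflTransGen sym ρ t := by
    clear hρ ht hwt
    induction hpath with
    | refl => exact Relation.ReflTransGen.refl
    | tail hxy hyz ih =>
      rename_i x y
      have hne : ¬ (x = u ∧ y = w) := by
        rintro ⟨rfl, rfl⟩; exact hyz.2 rfl
      exact ih.tail (Or.inl ⟨hyz.1, hne⟩)
  exact hcut ((symmRT hρu).trans (hρt.trans (symmRT hwt)))
end

section
/- Pointwise score lemma for side assignment: for all distinct x, y in X: if P x = P y then r x y equals the number of z ∈ X with P z = P x, and in particular r x y ≥ 2; if P x ≠ P y then r x y = −(#{z | P z = P x} + #{z | P z = P y}), and in particular r x y ≤ −2. Consequently, for distinct x, y, one has r x y ≥ 0 if and only if P x = P y. -/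
/-- Pointwise score lemma for side assignment: for distinct `x, y`, the score
`r x y` equals the size of their common block if `P x = P y` (hence is `≥ 2`),
and equals minus the sum of the sizes of their two blocks if `P x ≠ P y`
(hence is `≤ -2`); consequently `r x y ≥ 0 ↔ P x = P y`. -/
theorem pointwise_score {X : Type*} [Fintype X] [Nonempty X] (P : X → Bool) :
    let q : X → X → ℤ := fun x y => if P x = P y then 1 else 0
    let r : X → X → ℤ := fun x y =>
      3 * (∑ z : X, min (q x z) (q y z)) - (∑ z : X, q x z) - (∑ z : X, q y z)
    ∀ x y : X, x ≠ y →
      ((P x = P y →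
          r x y = ((Finset.univ.filter (fun z => P z = P x)).card : ℤ) ∧ 2 ≤ r x y) ∧
       (P x ≠ P y →
          r x y = -(((Finset.univ.filter (fun z => P z = P x)).card : ℤ) +
            ((Finset.univ.filter (fun z => P z = P y)).card : ℤ)) ∧ r x y ≤ -2) ∧
       (0 ≤ r x y ↔ P x = P y)) := by
  intro q r x y hxy
  classical
  have hq : ∀ a : X, (∑ z : X, q a z)
      = ((Finset.univ.filter (fun z => P z = P a)).card : ℤ) := by
    intro a
    simp only [q]
    have : (∑ z : X, if P a = P z then (1:ℤ) else 0)
        = ∑ z : X, if P z = P a then (1:ℤ) else 0 := by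
      apply Finset.sum_congr rfl; intro z _; simp [eq_comm]
    rw [this, Finset.sum_ite, Finset.sum_const, Finset.sum_const]
    simp
  -- membership facts
  have hx : x ∈ Finset.univ.filter (fun z => P z = P x) := by simp
  have hy : y ∈ Finset.univ.filter (fun z => P z = P y) := by simp
  have hpos : ∀ a : X, (1:ℤ) ≤ ((Finset.univ.filter (fun z => P z = P a)).card : ℤ) := by
    intro a
    have : 0 < (Finset.univ.filter (fun z => P z = P a)).card :=
      Finset.card_pos.mpr ⟨a, by simp⟩
    exact_mod_cast this
  by_cases h : P x = P y
  · -- same block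
    have hmin : (∑ z : X, min (q x z) (q y z)) = ∑ z : X, q x z := by
      apply Finset.sum_congr rfl
      intro z _
      simp [q, h, min_self]
    have hr : r x y = ((Finset.univ.filter (fun z => P z = P x)).card : ℤ) := by
      simp only [r, hmin, hq x, hq y]
      have : (Finset.univ.filter (fun z => P z = P y)) =
          (Finset.univ.filter (fun z => P z = P x)) := by
        apply Finset.filter_congr; intro z _; simp [h]
      rw [this]; ring
    have h2 : 2 ≤ r x y := by
      rw [hr]
      have hsub : ({x, y} : Finset X) ⊆ Finset.univ.filter (fun z => P z = P x) := by
        intro z hz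
        simp only [Finset.mem_insert, Finset.mem_singleton] at hz
        rcases hz with rfl | rfl
        · simp
        · simp [h]
      have hcard : ({x, y} : Finset X).card = 2 := Finset.card_pair hxy
      have := Finset.card_le_card hsub
      rw [hcard] at this
      exact_mod_cast this
    refine ⟨fun _ => ⟨hr, h2⟩, fun hne => absurd h hne, ?_⟩
    constructor
    · intro _; exact h
    · intro _; linarith
  · -- different blocks
    have hmin : (∑ z : X, min (q x z) (q y z)) = 0 := by
      apply Finset.sum_eq_zero
      intro z _
      simp only [q]
      by_cases hz : P x = P z
      · have : P y ≠ P z := fun hyz => h (hz.trans hyz.symm)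
        simp [hz, this]
      · by_cases hz' : P y = P z <;> simp [hz, hz']
    have hr : r x y = -(((Finset.univ.filter (fun z => P z = P x)).card : ℤ) +
        ((Finset.univ.filter (fun z => P z = P y)).card : ℤ)) := by
      simp only [r, hmin, hq x, hq y]; ring
    have h2 : r x y ≤ -2 := by
      rw [hr]
      have := hpos x
      have := hpos y
      linarith
    refine ⟨fun he => absurd he h, fun _ => ⟨hr, h2⟩, ?_⟩
    constructor
    · intro h0; linarith
    · intro he; exact absurd he h
end

section
/- Block-sum score lemma for agglomerative merging: let A and B be disjoint nonempty finite subsets of X. If all elements of A ∪ B have the same value under P, then Σ_{x ∈ A} Σ_{y ∈ B} r x y > 0. If instead every element of A has P-value true and every element of B has P-value false, then Σ_{x ∈ A} Σ_{y ∈ B} r x y < 0. -/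
/-- Block-sum score lemma for agglomerative merging: for disjoint nonempty
subsets `A`, `B` of `X`, the total score `∑_{x ∈ A} ∑_{y ∈ B} r x y` is
positive if all elements of `A ∪ B` lie in the same block of `P`, and negative
if `A` lies entirely in the `true` block and `B` entirely in the `false`
block. -/
theorem block_sum_score {X : Type*} [Fintype X] [DecidableEq X] [Nonempty X] (P : X → Bool)
    (A B : Finset X) (hdisj : Disjoint A B) (hA : A.Nonempty) (hB : B.Nonempty) :
    let q : X → X → ℤ := fun x y => if P x = P y then 1 else 0
    let r : X → X → ℤ := fun x y =>
      3 * (∑ z : X, min (q x z) (q y z)) - (∑ z : X, q x z) - (∑ z : X, q y z)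
    ((∀ x ∈ A ∪ B, ∀ y ∈ A ∪ B, P x = P y) → 0 < ∑ x ∈ A, ∑ y ∈ B, r x y) ∧
    ((∀ x ∈ A, P x = true) → (∀ y ∈ B, P y = false) →
      (∑ x ∈ A, ∑ y ∈ B, r x y) < 0) := by
  intro q r
  have hq0 : ∀ x z, 0 ≤ q x z := by
    intro x z; simp only [q]; split_ifs <;> norm_num
  have hS : ∀ x, 1 ≤ ∑ z : X, q x z := by
    intro x
    have h1 : q x x = 1 := by simp [q]
    calc (1 : ℤ) = q x x := h1.symm
      _ ≤ ∑ z : X, q x z :=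
        Finset.single_le_sum (fun z _ => hq0 x z) (Finset.mem_univ x)
  constructor
  · intro hsame
    apply Finset.sum_pos _ hA
    intro x hx
    apply Finset.sum_pos _ hB
    intro y hy
    have hxy : P x = P y :=
      hsame x (Finset.mem_union_left _ hx) y (Finset.mem_union_right _ hy)
    have hmin : ∀ z, min (q x z) (q y z) = q x z := by
      intro z; simp [q, hxy]
    have hqq : ∀ z, q y z = q x z := by
      intro z; simp [q, hxy]
    have : r x y = ∑ z : X, q x z := by
      simp only [r, hmin]
      rw [Finset.sum_congr rfl (fun z _ => hqq z)]
      ring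
    rw [this]
    exact lt_of_lt_of_le one_pos (hS x)
  · intro hAt hBf
    have : ∀ x ∈ A, ∑ y ∈ B, r x y < 0 := by
      intro x hx
      apply Finset.sum_neg _ hB
      intro y hy
      have hpx := hAt x hx
      have hpy := hBf y hy
      have hmin : ∀ z, min (q x z) (q y z) = 0 := by
        intro z
        simp only [q, hpx, hpy]
        by_cases h : P z = true
        · simp [h]
        · simp at h; simp [h]
      have : r x y = -(∑ z : X, q x z) - ∑ z : X, q y z := by
        simp only [r, hmin, Finset.sum_const_zero]
        ring
      rw [this]
      have h1 := hS x
      have h2 := hS y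
      omega
    exact Finset.sum_neg this hA
end
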